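/- Let G be a finite connected graph and c a proper χ(G)-coloring of G. Then either G admits a proper χ(G)-coloring c' such that D_{c'} contains a directed cycle, or for every vertex v of G there exists a proper χ(G)-coloring c'' of G such that D_{c''} is acyclic and v is its unique sink. -/

import Mathlib

/-- A directed cycle: a closed walk of positive length in the digraph `D`. -/
def HasDCycle {V : Type} (D : V → V → Prop) : Prop :=
  ∃ (x : V) (l : List V), List.Chain D x (l ++ [x])

lemma chain_iter {V : Type} (D : V → V → Prop) (f : V → V) (hf : ∀ x, D x (f x)) :
    ∀ (j : ℕ) (x : V), List.Chain D x ((List.range j).map fun i => f^[i + 1] x) := by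
  intro j
  induction j with
  | zero => intro x; simp; exact List.Chain.nil
  | succ n ih =>
    intro x
    rw [List.range_succ_eq_map]
    simp only [List.map_cons, List.map_map]
    refine List.Chain.cons (hf x) ?_
    have heq : ((fun i => f^[i + 1] x) ∘ Nat.succ) = fun i => f^[i + 1] (f x) := by
      funext i
      show f^[i + 1 + 1] x = f^[i + 1] (f x)
      rw [Function.iterate_succ_apply]
    rw [heq]
    exact ih (f x)

lemma exists_no_out {V : Type} [Finite V] [Nonempty V] (D : V → V → Prop)
    (h : ¬ HasDCycle D) : ∃ x, ∀ y, ¬ D x y := by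
  by_contra hc
  push_neg at hc
  choose f hf using hc
  obtain ⟨x₀⟩ := (inferInstance : Nonempty V)
  obtain ⟨a, b, hab, heq⟩ := Finite.exists_ne_map_eq_of_infinite (fun n : ℕ => f^[n] x₀)
  wlog hlt : a < b generalizing a b
  · exact this b a hab.symm heq.symm (by omega)
  set x := f^[a] x₀ with hx
  have hfix : f^[b - a] x = x := by
    rw [hx, ← Function.iterate_add_apply]
    rw [Nat.sub_add_cancel hlt.le]
    exact heq.symm
  obtain ⟨t, ht⟩ : ∃ t, b - a = t + 1 := ⟨b - a - 1, by omega⟩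
  apply h
  refine ⟨x, (List.range t).map (fun i => f^[i + 1] x), ?_⟩
  have := chain_iter D f hf (t + 1) x
  rw [List.range_succ] at this
  simp only [List.map_append, List.map_cons, List.map_nil] at this
  rw [ht] at hfix
  rwa [hfix] at this

lemma dart_telescope {V : Type} {G : SimpleGraph V} {a b : V} (w : G.Walk a b) (g : V → ℤ) :
    (w.darts.map (fun d => g d.toProd.2 - g d.toProd.1)).sum = g b - g a := by
  induction w with
  | nil => simp
  | cons h p ih =>
    simp only [SimpleGraph.Walk.darts_cons, List.map_cons, List.sum_cons, ih]
    ring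

lemma list_sum_map_add {α : Type*} (l : List α) (f g : α → ℤ) :
    (l.map (fun x => f x + g x)).sum = (l.map f).sum + (l.map g).sum := by
  induction l with
  | nil => simp
  | cons a l ih => simp [ih]; ring

lemma zval_up {k : ℕ} [NeZero k] (x y : ZMod k) (h1 : x ≠ y) (h2 : y ≠ x + 1) :
    ((x + 1) - y).val = (x - y).val + 1 := by
  have hd : x - y ≠ 0 := sub_ne_zero.mpr h1
  have hne : (x - y).val ≠ k - 1 := by
    intro hv
    apply h2
    have hk : (0:ℕ) < k := Nat.pos_of_ne_zero (NeZero.ne k)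
    have h3 : x - y = ((k - 1 : ℕ) : ZMod k) := by rw [← hv, ZMod.natCast_zmod_val]
    have h4 : x - y = -1 := by
      rw [h3]
      have : ((k - 1 : ℕ) : ZMod k) = (k : ZMod k) - 1 := by
        push_cast [Nat.cast_sub hk]
        ring
      rw [this, ZMod.natCast_self]; ring
    have := sub_eq_iff_eq_add.mp h4
    rw [this]; ring
  have hlt : (x - y).val + 1 < k := by
    have := ZMod.val_lt (x - y)
    omega
  have : (x + 1) - y = (((x - y).val + 1 : ℕ) : ZMod k) := by
    push_cast [ZMod.natCast_zmod_val]
    ring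
  rw [this, ZMod.val_cast_of_lt hlt]

lemma zval_down {k : ℕ} [NeZero k] (x y : ZMod k) (h1 : y ≠ x) :
    (y - (x + 1)).val = (y - x).val - 1 ∧ 1 ≤ (y - x).val := by
  have hd : y - x ≠ 0 := sub_ne_zero.mpr h1
  have hpos : 1 ≤ (y - x).val := by
    rcases Nat.eq_zero_or_pos (y - x).val with h | h
    · exact absurd (by rw [← ZMod.natCast_zmod_val (y - x), h]; simp) hd
    · exact h
  refine ⟨?_, hpos⟩
  have hlt : (y - x).val - 1 < k := by have := ZMod.val_lt (y - x); omega
  have : y - (x + 1) = (((y - x).val - 1 : ℕ) : ZMod k) := by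
    push_cast [Nat.cast_sub hpos, ZMod.natCast_zmod_val]
    ring
  rw [this, ZMod.val_cast_of_lt hlt]

/-- Either some proper `χ(G)`-coloring yields a digraph with a directed cycle,
or every vertex `v` is the unique sink of `D_{c''}` for some proper
`χ(G)`-coloring `c''` with `D_{c''}` acyclic. -/
theorem dcycle_or_nice_coloring {V : Type} [Fintype V] (G : SimpleGraph V)
    (hG : G.Connected) (χ : ℕ) (hχ : G.chromaticNumber = χ) :
    (∃ c' : V → ZMod χ, (∀ u w, G.Adj u w → c' u ≠ c' w) ∧
        HasDCycle (fun a b => G.Adj a b ∧ c' b = c' a + 1)) ∨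
    (∀ v : V, ∃ c'' : V → ZMod χ, (∀ u w, G.Adj u w → c'' u ≠ c'' w) ∧
        ¬ HasDCycle (fun a b => G.Adj a b ∧ c'' b = c'' a + 1) ∧
        (∀ y, ¬ (G.Adj v y ∧ c'' y = c'' v + 1)) ∧
        (∀ x, (∀ y, ¬ (G.Adj x y ∧ c'' y = c'' x + 1)) → x = v)) := by
  classical
  by_cases hcyc : (∃ c' : V → ZMod χ, (∀ u w, G.Adj u w → c' u ≠ c' w) ∧
      HasDCycle (fun a b => G.Adj a b ∧ c' b = c' a + 1))
  · exact Or.inl hcyc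
  right
  have H : ∀ c : V → ZMod χ, (∀ u w, G.Adj u w → c u ≠ c w) →
      ¬ HasDCycle (fun a b => G.Adj a b ∧ c b = c a + 1) :=
    fun c hc hcy => hcyc ⟨c, hc, hcy⟩
  have hne : Nonempty V := hG.nonempty
  have hχ0 : χ ≠ 0 := by
    intro h0
    subst h0
    haveI := G.isEmpty_of_chromaticNumber_eq_zero (by simpa using hχ)
    exact hne.elim fun v => IsEmpty.false v
  haveI : NeZero χ := ⟨hχ0⟩
  have hcol : G.Colorable χ := by
    have := G.colorable_chromaticNumber_of_fintype
    rwa [hχ, ENat.toNat_coe] at this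
  obtain ⟨C⟩ := hcol
  set c0 : V → ZMod χ := fun u => ((C u : ℕ) : ZMod χ) with hc0
  have hc0p : ∀ u w, G.Adj u w → c0 u ≠ c0 w := by
    intro u w huw heq
    apply C.valid huw
    have h1 : ((C u : ℕ) : ZMod χ).val = (C u : ℕ) := ZMod.val_cast_of_lt (C u).isLt
    have h2 : ((C w : ℕ) : ZMod χ).val = (C w : ℕ) := ZMod.val_cast_of_lt (C w).isLt
    apply Fin.ext
    rw [← h1, ← h2]
    simp only [hc0] at heq
    rw [heq]
  intro v
  have hreach : ∀ u, G.Reachable v u := fun u => hG.preconnected v u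
  set p : ∀ u : V, G.Walk v u := fun u => (hreach u).some with hp
  set F : (V → ZMod χ) → ℕ := fun c =>
    ∑ u : V, ((p u).darts.map (fun d => (c d.toProd.2 - c d.toProd.1).val)).sum with hF
  set B : ℕ := ∑ u : V, (p u).darts.length * (χ - 1) with hB
  have hFB : ∀ c : V → ZMod χ, F c ≤ B := by
    intro c
    apply Finset.sum_le_sum
    intro u _
    have hall : ∀ x ∈ (p u).darts.map (fun d => (c d.toProd.2 - c d.toProd.1).val),
        x ≤ χ - 1 := by
      intro x hx
      obtain ⟨d, _, rfl⟩ := List.mem_map.mp hx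
      have := ZMod.val_lt (c d.toProd.2 - c d.toProd.1)
      omega
    calc ((p u).darts.map (fun d => (c d.toProd.2 - c d.toProd.1).val)).sum
        ≤ ((p u).darts.map (fun d => (c d.toProd.2 - c d.toProd.1).val)).length • (χ - 1) :=
          List.sum_le_card_nsmul _ _ hall
      _ = (p u).darts.length * (χ - 1) := by
          rw [List.length_map, smul_eq_mul]
  have fire : ∀ c : V → ZMod χ, (∀ u w, G.Adj u w → c u ≠ c w) →
      ∀ s : V, s ≠ v → (∀ y, ¬ (G.Adj s y ∧ c y = c s + 1)) →
      (∀ u w, G.Adj u w → Function.update c s (c s + 1) u ≠ Function.update c s (c s + 1) w)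
        ∧ F (Function.update c s (c s + 1)) = F c + 1 := by
    intro c hc s hsv hsink
    set c' : V → ZMod χ := Function.update c s (c s + 1) with hc'
    have hc's : c' s = c s + 1 := by simp [hc']
    have hc'o : ∀ x, x ≠ s → c' x = c x := by
      intro x hx; simp [hc', Function.update_of_ne hx]
    constructor
    · intro u w huw
      by_cases hu : u = s
      · by_cases hw : w = s
        · exact absurd (hu ▸ hw ▸ huw) (G.irrefl)
        · rw [hu, hc's, hc'o w hw]
          intro h
          exact hsink w ⟨hu ▸ huw, h.symm⟩
      · by_cases hw : w = s
        · rw [hw, hc's, hc'o u hu]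
          intro h
          exact hsink u ⟨(hw ▸ huw).symm, h⟩
        · rw [hc'o u hu, hc'o w hw]
          exact hc u w huw
    · have key : ∀ u : V,
          ((((p u).darts.map (fun d => (c' d.toProd.2 - c' d.toProd.1).val)).sum : ℕ) : ℤ)
          = ((((p u).darts.map (fun d => (c d.toProd.2 - c d.toProd.1).val)).sum : ℕ) : ℤ)
            + (if u = s then 1 else 0) := by
        intro u
        have cast_sum : ∀ (c₁ : V → ZMod χ),
            ((((p u).darts.map (fun d => (c₁ d.toProd.2 - c₁ d.toProd.1).val)).sum : ℕ) : ℤ)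
            = ((p u).darts.map (fun d => ((c₁ d.toProd.2 - c₁ d.toProd.1).val : ℤ))).sum := by
          intro c₁
          rw [Nat.cast_list_sum, List.map_map]
          rfl
        rw [cast_sum c', cast_sum c]
        have hmap : ((p u).darts.map (fun d => ((c' d.toProd.2 - c' d.toProd.1).val : ℤ)))
            = ((p u).darts.map (fun d => ((c d.toProd.2 - c d.toProd.1).val : ℤ)
                + ((if d.toProd.2 = s then (1:ℤ) else 0)
                   - (if d.toProd.1 = s then (1:ℤ) else 0)))) := by
          apply List.map_congr_left
          intro d _
          have hadj : G.Adj d.toProd.1 d.toProd.2 := d.adj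
          rcases eq_or_ne d.toProd.1 s with h1 | h1
          · have h2 : d.toProd.2 ≠ s := by
              intro h2
              exact G.irrefl (h1 ▸ h2 ▸ hadj)
            have hadjs : G.Adj s d.toProd.2 := h1 ▸ hadj
            have hy1 : c d.toProd.2 ≠ c s := fun h => hc s d.toProd.2 hadjs h.symm
            obtain ⟨he, hge⟩ := zval_down (c s) (c d.toProd.2) hy1
            rw [hc'o d.toProd.2 h2, h1, hc's, he]
            simp only [h2, h1, if_true, if_false]
            push_cast [Nat.cast_sub hge]
            ring
          · rcases eq_or_ne d.toProd.2 s with h2 | h2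
            · have hadjs : G.Adj s d.toProd.1 := (h2 ▸ hadj).symm
              have hx1 : c s ≠ c d.toProd.1 := fun h => hc s d.toProd.1 hadjs h
              have hx2 : c d.toProd.1 ≠ c s + 1 := fun h => hsink d.toProd.1 ⟨hadjs, h⟩
              have he := zval_up (c s) (c d.toProd.1) hx1 hx2
              rw [hc'o d.toProd.1 h1, h2, hc's, he]
              simp only [h2, h1, if_true, if_false]
              push_cast
              ring
            · rw [hc'o d.toProd.1 h1, hc'o d.toProd.2 h2]
              simp only [h1, h2, if_false]
              ring
        rw [hmap, list_sum_map_add]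
        congr 1
        have := dart_telescope (p u) (fun x => if x = s then (1:ℤ) else 0)
        rw [this]
        have hv : v ≠ s := fun h => hsv h.symm
        simp [hv]
      have hZ : ((F c' : ℕ) : ℤ) = ((F c : ℕ) : ℤ) + 1 := by
        rw [hF]
        rw [Nat.cast_sum, Nat.cast_sum]
        calc (∑ u : V,
              ((((p u).darts.map (fun d => (c' d.toProd.2 - c' d.toProd.1).val)).sum : ℕ) : ℤ))
            = ∑ u : V,
              (((((p u).darts.map (fun d => (c d.toProd.2 - c d.toProd.1).val)).sum : ℕ) : ℤ)
                + (if u = s then 1 else 0)) := Finset.sum_congr rfl (fun u _ => key u)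
          _ = (∑ u : V,
              ((((p u).darts.map (fun d => (c d.toProd.2 - c d.toProd.1).val)).sum : ℕ) : ℤ))
                + ∑ u : V, (if u = s then (1:ℤ) else 0) := Finset.sum_add_distrib
          _ = (∑ u : V,
              ((((p u).darts.map (fun d => (c d.toProd.2 - c d.toProd.1).val)).sum : ℕ) : ℤ))
                + 1 := by rw [Finset.sum_ite_eq' Finset.univ s (fun _ => (1:ℤ))]; simp
      exact_mod_cast hZ
  have main : ∀ n : ℕ, ∀ c : V → ZMod χ, (∀ u w, G.Adj u w → c u ≠ c w) →
      B + 1 - F c ≤ n →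
      ∃ c'' : V → ZMod χ, (∀ u w, G.Adj u w → c'' u ≠ c'' w) ∧
        ∀ x, x ≠ v → ∃ y, G.Adj x y ∧ c'' y = c'' x + 1 := by
    intro n
    induction n with
    | zero =>
      intro c hc hle
      exfalso
      have := hFB c
      omega
    | succ n ih =>
      intro c hc hle
      by_cases hs : ∃ s, s ≠ v ∧ ∀ y, ¬ (G.Adj s y ∧ c y = c s + 1)
      · obtain ⟨s, hsv, hsink⟩ := hs
        obtain ⟨hp', hF'⟩ := fire c hc s hsv hsink
        apply ih _ hp'
        have := hFB c
        omega
      · push_neg at hs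
        refine ⟨c, hc, ?_⟩
        intro x hxv
        exact hs x hxv
  obtain ⟨c'', hc''p, hc''s⟩ := main (B + 1 - F c0) c0 hc0p le_rfl
  have hnc := H c'' hc''p
  obtain ⟨x, hx⟩ := exists_no_out _ hnc
  have hxv : x = v := by
    by_contra hxe
    obtain ⟨y, hy⟩ := hc''s x hxe
    exact hx y hy
  refine ⟨c'', hc''p, hnc, hxv ▸ hx, ?_⟩
  intro x' hx'
  by_contra hne'
  obtain ⟨y, hy⟩ := hc''s x' hne'
  exact hx' y hy
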